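/- For β ∈ (0, 1/2), with a = 2β + 1/(2β) − 2 > 0, the integral ∫_{-2}^{2} log(2 + a − x) · (2 − x²)/√(4 − x²) dx equals 4πβ². -/

import Mathlib

open MeasureTheory

lemma sqrt_deriv {x : ℝ} (h4 : 0 < 4 - x^2) :
    HasDerivAt (fun x : ℝ => Real.sqrt (4 - x^2)) (-x / Real.sqrt (4 - x^2)) x := by
  have h1 : HasDerivAt (fun x : ℝ => 4 - x^2) (-(2*x)) x := by
    simpa using (hasDerivAt_pow 2 x).const_sub 4
  have h2 := (Real.hasDerivAt_sqrt (ne_of_gt h4)).comp x h1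
  refine HasDerivAt.congr_deriv h2 (Eq.symm ?_)
  have hs : 0 < Real.sqrt (4 - x^2) := Real.sqrt_pos.mpr h4
  field_simp

lemma arcsin_deriv {x : ℝ} (h4 : 0 < 4 - x^2) :
    HasDerivAt (fun x : ℝ => Real.arcsin (x/2)) (1 / Real.sqrt (4 - x^2)) x := by
  have hx1 : -2 < x := by nlinarith
  have hx2 : x < 2 := by nlinarith
  have h1 : HasDerivAt (fun x : ℝ => x/2) (1/2) x := (hasDerivAt_id x).div_const 2
  have h2 := (Real.hasDerivAt_arcsin (by intro h; rw [div_eq_iff (by norm_num : (2:ℝ) ≠ 0)] at h; linarith)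
    (by intro h; rw [div_eq_iff (by norm_num : (2:ℝ) ≠ 0)] at h; linarith)).comp x h1
  refine HasDerivAt.congr_deriv h2 (Eq.symm ?_)
  have he : 1 - (x/2)^2 = (4 - x^2)/4 := by ring
  have h42 : Real.sqrt 4 = 2 := by
    rw [show (4:ℝ) = 2^2 by norm_num, Real.sqrt_sq (by norm_num : (0:ℝ) ≤ 2)]
  rw [he, Real.sqrt_div h4.le, h42]
  have hs : 0 < Real.sqrt (4 - x^2) := Real.sqrt_pos.mpr h4
  field_simp

lemma t_deriv {x : ℝ} (h4 : 0 < 4 - x^2) :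
    HasDerivAt (fun x : ℝ => x / (2 + Real.sqrt (4 - x^2)))
      (2 / (Real.sqrt (4 - x^2) * (2 + Real.sqrt (4 - x^2)))) x := by
  have hs : 0 < Real.sqrt (4 - x^2) := Real.sqrt_pos.mpr h4
  have hs2 : Real.sqrt (4 - x^2) ^ 2 = 4 - x^2 := Real.sq_sqrt h4.le
  have h2s : (0:ℝ) < 2 + Real.sqrt (4 - x^2) := by linarith
  have h := (hasDerivAt_id x).div ((sqrt_deriv h4).const_add 2) (ne_of_gt h2s)
  refine HasDerivAt.congr_deriv h (Eq.symm ?_)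
  set s := Real.sqrt (4 - x^2)
  field_simp
  ring_nf
  simp only [id_eq]
  nlinarith [hs2]

lemma arctan_deriv {b c x : ℝ} (hb : 2 < b) (hc : 0 < c) (hc2 : c^2 = b^2 - 4)
    (h4 : 0 < 4 - x^2) (hx2 : x < 2) :
    HasDerivAt (fun x : ℝ => Real.arctan ((b * (x / (2 + Real.sqrt (4 - x^2))) - 2)/c))
      (c / (2 * Real.sqrt (4 - x^2) * (b - x))) x := by
  have hs : 0 < Real.sqrt (4 - x^2) := Real.sqrt_pos.mpr h4
  have hs2 : Real.sqrt (4 - x^2) ^ 2 = 4 - x^2 := Real.sq_sqrt h4.le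
  have h2s : (0:ℝ) < 2 + Real.sqrt (4 - x^2) := by linarith
  have hbx : (0:ℝ) < b - x := by linarith
  have hg : HasDerivAt (fun x : ℝ => (b * (x / (2 + Real.sqrt (4 - x^2))) - 2)/c)
      ((b * (2 / (Real.sqrt (4 - x^2) * (2 + Real.sqrt (4 - x^2)))))/c) x :=
    (((t_deriv h4).const_mul b).sub_const 2).div_const c
  have h := (Real.hasDerivAt_arctan ((b * (x / (2 + Real.sqrt (4 - x^2))) - 2)/c)).comp x hg
  refine HasDerivAt.congr_deriv h (Eq.symm ?_)
  set s := Real.sqrt (4 - x^2) with hsdef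
  have hkey : (b * (x / (2 + s)) - 2)^2 + c^2 = 4*b*(b-x)/(2+s) := by
    field_simp
    linear_combination b^2 * hs2 + (2+s)^2 * hc2
  have h2 : 1 + ((b * (x / (2 + s)) - 2)/c)^2 = (4*b*(b-x)/(2+s))/c^2 := by
    rw [← hkey, div_pow]
    field_simp
    ring
  rw [h2]
  have hbpos : (0:ℝ) < b := by linarith
  field_simp
  ring

lemma F_deriv {b c x : ℝ} (hb : 2 < b) (hc : 0 < c) (hc2 : c^2 = b^2 - 4)
    (h4 : 0 < 4 - x^2) (hx2 : x < 2) :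
    HasDerivAt (fun x : ℝ => x * Real.sqrt (4-x^2)/2 * Real.log (b-x)
      - x * Real.sqrt (4-x^2)/4 + (b^2/2-1) * Real.arcsin (x/2)
      - b/2 * Real.sqrt (4-x^2)
      - b*c*Real.arctan ((b * (x / (2 + Real.sqrt (4-x^2))) - 2)/c))
      (Real.log (b-x) * ((2 - x^2)/Real.sqrt (4-x^2))) x := by
  have hs : 0 < Real.sqrt (4 - x^2) := Real.sqrt_pos.mpr h4
  have hs2 : Real.sqrt (4 - x^2) ^ 2 = 4 - x^2 := Real.sq_sqrt h4.le
  have hbx : (0:ℝ) < b - x := by linarith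
  have hlog : HasDerivAt (fun x : ℝ => Real.log (b - x)) (-(1/(b-x))) x := by
    have h1 : HasDerivAt (fun x : ℝ => b - x) (-1) x := by
      simpa using (hasDerivAt_id x).const_sub b
    have := (Real.hasDerivAt_log (ne_of_gt hbx)).comp x h1
    refine HasDerivAt.congr_deriv this (Eq.symm ?_)
    field_simp
  have hxs : HasDerivAt (fun x : ℝ => x * Real.sqrt (4-x^2))
      ((4 - 2*x^2) / Real.sqrt (4-x^2)) x := by
    have := (hasDerivAt_id x).mul (sqrt_deriv h4)
    refine HasDerivAt.congr_deriv this (Eq.symm ?_)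
    field_simp
    rw [hs2, id_eq]; ring
  have h1 := ((hxs.div_const 2).mul hlog).sub (hxs.div_const 4)
  have h2 := h1.add ((arcsin_deriv h4).const_mul (b^2/2-1))
  have h3 := h2.sub ((sqrt_deriv h4).const_mul (b/2))
  have h4' := h3.sub ((arctan_deriv hb hc hc2 h4 hx2).const_mul (b*c))
  refine HasDerivAt.congr_deriv h4' (Eq.symm ?_)
  set s := Real.sqrt (4 - x^2) with hsdef
  field_simp
  linear_combination 4*x * hs2 + 4*b * hc2

lemma f_integrable {b : ℝ} (hb : 2 < b) :
    IntervalIntegrable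
      (fun x => Real.log (b - x) * ((2 - x^2)/Real.sqrt (4 - x^2))) volume (-2) 2 := by
  set L : ℝ := |Real.log (b-2)| + |Real.log (b+2)| with hL
  have hL0 : 0 ≤ L := by positivity
  have h1 : IntervalIntegrable (fun y : ℝ => y ^ (-(1/2) : ℝ)) volume 0 4 :=
    intervalIntegral.intervalIntegrable_rpow' (by norm_num)
  have h2 : IntervalIntegrable (fun x : ℝ => (2 - x) ^ (-(1/2) : ℝ)) volume (-2) 2 := by
    have := (h1.comp_sub_left 2).symm
    norm_num at this
    exact this
  have h3 : IntervalIntegrable (fun x : ℝ => (2 + x) ^ (-(1/2) : ℝ)) volume (-2) 2 := by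
    have := h1.comp_add_left 2
    norm_num at this
    exact this
  have hg : IntervalIntegrable
      (fun x : ℝ => 2*L * ((2 - x) ^ (-(1/2) : ℝ) + (2 + x) ^ (-(1/2) : ℝ))) volume (-2) 2 :=
    (h2.add h3).const_mul (2*L)
  apply hg.mono_fun'
  · apply Measurable.aestronglyMeasurable
    exact (Real.measurable_log.comp (measurable_const.sub measurable_id)).mul
      ((measurable_const.sub (measurable_id.pow_const 2)).div
        (Real.continuous_sqrt.measurable.comp (measurable_const.sub (measurable_id.pow_const 2))))
  · rw [Set.uIoc_of_le (by norm_num : (-2:ℝ) ≤ 2)]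
    rw [Filter.EventuallyLE, MeasureTheory.ae_restrict_iff' measurableSet_Ioc]
    filter_upwards with x hx
    obtain ⟨hx1, hx2⟩ := hx
    have hsa : 0 < Real.sqrt (2 + x) := Real.sqrt_pos.mpr (by linarith)
    have hub : (0:ℝ) ≤ (2 - x) ^ (-(1/2) : ℝ) := Real.rpow_nonneg (by linarith) _
    have hvb : (0:ℝ) ≤ (2 + x) ^ (-(1/2) : ℝ) := Real.rpow_nonneg (by linarith) _
    rcases eq_or_lt_of_le hx2 with h | hx2'
    · subst h
      norm_num [Real.sqrt_zero]
      positivity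
    · have h4 : 0 < 4 - x^2 := by nlinarith
      have hsb : 0 < Real.sqrt (2 - x) := Real.sqrt_pos.mpr (by linarith)
      have hs : Real.sqrt (4 - x^2) = Real.sqrt (2-x) * Real.sqrt (2+x) := by
        rw [show (4 : ℝ) - x^2 = (2-x)*(2+x) by ring, Real.sqrt_mul (by linarith)]
      have hu : (2 - x) ^ (-(1/2) : ℝ) = 1 / Real.sqrt (2-x) := by
        rw [Real.rpow_neg (by linarith), Real.sqrt_eq_rpow]; norm_num
      have hv : (2 + x) ^ (-(1/2) : ℝ) = 1 / Real.sqrt (2+x) := by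
        rw [Real.rpow_neg (by linarith), Real.sqrt_eq_rpow]; norm_num
      have habs : |Real.log (b-x)| ≤ L := by
        have hl1 : Real.log (b-2) ≤ Real.log (b-x) :=
          Real.log_le_log (by linarith) (by linarith)
        have hl2 : Real.log (b-x) ≤ Real.log (b+2) :=
          Real.log_le_log (by linarith) (by linarith)
        rw [abs_le]
        constructor
        · have := neg_abs_le (Real.log (b-2)); have := abs_nonneg (Real.log (b+2)); linarith
        · have := le_abs_self (Real.log (b+2)); have := abs_nonneg (Real.log (b-2)); linarith
      have hkey : 1 / Real.sqrt (4 - x^2) ≤ 1 / Real.sqrt (2-x) + 1 / Real.sqrt (2+x) := by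
        rw [hs]
        rcases le_or_gt 0 x with hx0 | hx0
        · have h1b : 1 ≤ Real.sqrt (2+x) := by
            rw [show (1:ℝ) = Real.sqrt 1 by simp]
            exact Real.sqrt_le_sqrt (by linarith)
          have : 1 / (Real.sqrt (2-x) * Real.sqrt (2+x)) ≤ 1 / Real.sqrt (2-x) := by
            rw [div_le_div_iff₀ (by positivity) hsb]
            nlinarith
          have hpos : 0 < 1 / Real.sqrt (2+x) := by positivity
          linarith
        · have h1b : 1 ≤ Real.sqrt (2-x) := by
            rw [show (1:ℝ) = Real.sqrt 1 by simp]
            exact Real.sqrt_le_sqrt (by linarith)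
          have : 1 / (Real.sqrt (2-x) * Real.sqrt (2+x)) ≤ 1 / Real.sqrt (2+x) := by
            rw [div_le_div_iff₀ (by positivity) hsa]
            nlinarith
          have hpos : 0 < 1 / Real.sqrt (2-x) := by positivity
          linarith
      have hx2abs : |2 - x^2| ≤ 2 := by
        rw [abs_le]; constructor <;> nlinarith
      have hssq : 0 < Real.sqrt (4 - x^2) := Real.sqrt_pos.mpr h4
      have : ‖Real.log (b - x) * ((2 - x^2)/Real.sqrt (4 - x^2))‖
          = |Real.log (b-x)| * (|2 - x^2| / Real.sqrt (4 - x^2)) := by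
        rw [Real.norm_eq_abs, abs_mul, abs_div, abs_of_pos hssq]
      rw [this, hu, hv]
      calc |Real.log (b-x)| * (|2 - x^2| / Real.sqrt (4 - x^2))
          ≤ L * (2 / Real.sqrt (4 - x^2)) := by gcongr
        _ = 2*L * (1 / Real.sqrt (4 - x^2)) := by ring
        _ ≤ 2*L * (1 / Real.sqrt (2-x) + 1 / Real.sqrt (2+x)) := by
            apply mul_le_mul_of_nonneg_left hkey (by positivity)

lemma F_cont {b c : ℝ} (hb : 2 < b) (hc : 0 < c) :
    ContinuousOn (fun x : ℝ => x * Real.sqrt (4-x^2)/2 * Real.log (b-x)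
      - x * Real.sqrt (4-x^2)/4 + (b^2/2-1) * Real.arcsin (x/2)
      - b/2 * Real.sqrt (4-x^2)
      - b*c*Real.arctan ((b * (x / (2 + Real.sqrt (4-x^2))) - 2)/c))
      (Set.Icc (-2:ℝ) 2) := by
  have hsq : Continuous fun x : ℝ => Real.sqrt (4 - x^2) :=
    Real.continuous_sqrt.comp (by continuity)
  have hlog : ContinuousOn (fun x : ℝ => Real.log (b - x)) (Set.Icc (-2:ℝ) 2) := by
    apply ContinuousOn.log (by fun_prop)
    intro x hx
    have := hx.2
    have : (0:ℝ) < b - x := by linarith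
    exact ne_of_gt this
  have harg : Continuous fun x : ℝ => (b * (x / (2 + Real.sqrt (4-x^2))) - 2)/c := by
    apply Continuous.div_const
    apply Continuous.sub _ continuous_const
    apply Continuous.mul continuous_const
    apply Continuous.div continuous_id (continuous_const.add hsq)
    intro x
    have := Real.sqrt_nonneg (4 - x^2)
    simp only [Pi.add_apply]
    positivity
  apply ContinuousOn.sub
  apply ContinuousOn.sub
  apply ContinuousOn.add
  apply ContinuousOn.sub
  · exact ((((continuous_id.mul hsq).div_const 2)).continuousOn).mul hlog
  · exact ((continuous_id.mul hsq).div_const 4).continuousOn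
  · exact (continuous_const.mul (Real.continuous_arcsin.comp (continuous_id.div_const 2))).continuousOn
  · exact (continuous_const.mul hsq).continuousOn
  · exact (continuous_const.mul (Real.continuous_arctan.comp harg)).continuousOn

theorem stmt_4 (β : ℝ) (hβ0 : 0 < β) (hβ : β < 1/2) :
    ∫ x in (-2:ℝ)..2,
        Real.log (2 + (2*β + 1/(2*β) - 2) - x) * ((2 - x^2)/Real.sqrt (4 - x^2))
      = 4*Real.pi*β^2 := by
  have h2b : (0:ℝ) < 2*β := by linarith
  set b : ℝ := 2*β + 1/(2*β) with hbdef
  set c : ℝ := 1/(2*β) - 2*β with hcdef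
  have hmul : 2*β*(1/(2*β)) = 1 := by field_simp
  have hne : 2*β - 1 ≠ 0 := ne_of_lt (by linarith)
  have hsqp : 0 < (2*β-1)^2 := lt_of_le_of_ne (sq_nonneg _) (Ne.symm (pow_ne_zero 2 hne))
  have hb : 2 < b := by rw [hbdef]; nlinarith [hmul, h2b, hsqp]
  have hmc : 2*β*c = 1 - 4*β^2 := by rw [hcdef]; field_simp; ring
  have hc : 0 < c := by nlinarith [hmc, h2b]
  have hc2 : c^2 = b^2 - 4 := by rw [hbdef, hcdef]; field_simp; ring
  have hbc : b - c = 4*β := by rw [hbdef, hcdef]; ring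
  have hbb : b*(4*β) = 8*β^2 + 2 := by rw [hbdef]; field_simp; ring
  have hrw : ∀ x : ℝ, 2 + (b - 2) - x = b - x := fun x => by ring
  simp only [hrw]
  have key := intervalIntegral.integral_eq_sub_of_hasDerivAt_of_le
    (by norm_num : (-2:ℝ) ≤ 2) (F_cont hb hc)
    (fun x hx => F_deriv hb hc hc2 (by nlinarith [hx.1, hx.2]) hx.2)
    (f_integrable hb)
  rw [key]
  have hs0 : Real.sqrt (4 - (2:ℝ)^2) = 0 := by norm_num
  have hs0' : Real.sqrt (4 - (-2:ℝ)^2) = 0 := by norm_num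
  have harc1 : Real.arcsin ((2:ℝ)/2) = Real.pi/2 := by norm_num [Real.arcsin_one]
  have harc2 : Real.arcsin ((-2:ℝ)/2) = -(Real.pi/2) := by norm_num [Real.arcsin_neg_one]
  simp only [hs0, hs0', harc1, harc2]
  norm_num
  have hsum : Real.arctan ((b-2)/c) + Real.arctan ((b+2)/c) = Real.pi/2 := by
    have h1 : (0:ℝ) < (b-2)/c := div_pos (by linarith) hc
    have h2 : ((b-2)/c)⁻¹ = (b+2)/c := by
      rw [inv_div]
      rw [div_eq_div_iff (by linarith : (b:ℝ) - 2 ≠ 0) (ne_of_gt hc)]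
      linear_combination hc2
    have h3 := Real.arctan_inv_of_pos h1
    rw [h2] at h3
    linarith
  have hneg : Real.arctan ((-b-2)/c) = -Real.arctan ((b+2)/c) := by
    rw [show (-b-2)/c = -((b+2)/c) by ring, Real.arctan_neg]
  rw [hneg]
  have hcval : c = b - 4*β := by linarith
  have hbcval : b*c = b^2 - 8*β^2 - 2 := by linear_combination b*hcval - hbb
  linear_combination (-(b*c))*hsum - (Real.pi/2)*hbcval
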